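/- For every graph G and every integer k ≥ 2, the pendant tree (k+1)-connectivity is at most the pendant tree k-connectivity: τ_{k+1}(G) ≤ τ_k(G). -/

import Mathlib

open SimpleGraph

/-- `T` is a pendant `S`-Steiner tree in `G`: a subtree of `G` containing `S` in which
every vertex of `S` has degree exactly one. -/
def IsPendantSteinerTree {V : Type*} (G : SimpleGraph V) (S : Set V) (T : G.Subgraph) : Prop :=
  T.coe.IsTree ∧ S ⊆ T.verts ∧ ∀ v ∈ S, (T.neighborSet v).ncard = 1

/-- Two (pendant) `S`-Steiner trees are internally disjoint: edge-disjoint with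
vertex intersection exactly `S`. -/
def InternallyDisjoint {V : Type*} (G : SimpleGraph V) (S : Set V) (T T' : G.Subgraph) : Prop :=
  T.edgeSet ∩ T'.edgeSet = ∅ ∧ T.verts ∩ T'.verts = S

/-- There exist `ℓ` pairwise internally disjoint pendant `S`-Steiner trees in `G`. -/
def HasPendantTrees {V : Type*} (G : SimpleGraph V) (S : Set V) (ℓ : ℕ) : Prop :=
  ∃ T : Fin ℓ → G.Subgraph, (∀ i, IsPendantSteinerTree G S (T i)) ∧
    ∀ i j, i ≠ j → InternallyDisjoint G S (T i) (T j)

/-- The pendant tree `k`-connectivity `τ_k(G)`: the largest `ℓ` such that every `k`-set of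
vertices admits `ℓ` pairwise internally disjoint pendant Steiner trees. -/
noncomputable def pendantConn {V : Type*} (G : SimpleGraph V) (k : ℕ) : ℕ :=
  sSup {ℓ | ∀ S : Finset V, S.card = k → HasPendantTrees G (↑S) ℓ}

/-- The minimum degree of a graph, via neighbour sets. -/
noncomputable def minDeg {V : Type*} (G : SimpleGraph V) : ℕ :=
  sInf (Set.range fun v => (G.neighborSet v).ncard)

/-- `G` is `k`-connected. -/
def IsKConnected {V : Type*} [Fintype V] (G : SimpleGraph V) (k : ℕ) : Prop :=
  k < Fintype.card V ∧
    ∀ U : Finset V, U.card < k → (G.induce ((↑U : Set V)ᶜ)).Connected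

/-- The vertex connectivity `κ(G)`. -/
noncomputable def vertexConn {V : Type*} [Fintype V] (G : SimpleGraph V) : ℕ :=
  sSup {k | IsKConnected G k}

section Aux

open SimpleGraph.Walk

variable {V : Type*} {G : SimpleGraph V}

private lemma first_edge_mem {α : Type*} {H : SimpleGraph α} {a b : α}
    (p : H.Walk a b) (hn : ¬ p.Nil) : s(a, p.getVert 1) ∈ p.edges := by
  cases p with
  | nil => simp at hn
  | cons h q => simp [Walk.getVert_cons_succ]

/-- In a tree with at least three vertices there is no pair of mutually
pendant adjacent vertices. -/
private lemma aux_no_leaf_pair {T : G.Subgraph} (htree : T.coe.IsTree)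
    {s v u : V} (hsT : s ∈ T.verts) (hvT : v ∈ T.verts) (huT : u ∈ T.verts)
    (hus : u ≠ s) (huv : u ≠ v)
    (hns : T.neighborSet s = {v}) (hnv : T.neighborSet v = {s}) : False := by
  classical
  obtain ⟨q0⟩ := htree.isConnected.preconnected ⟨s, hsT⟩ ⟨u, huT⟩
  obtain ⟨q, hq⟩ := q0.toPath
  have hn1 : ¬ q.Nil := Walk.not_nil_of_ne (fun h => hus (congrArg Subtype.val h).symm)
  have hadj1 : T.coe.Adj ⟨s, hsT⟩ (q.getVert 1) := q.adj_snd hn1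
  have hx1 : ((q.getVert 1 : T.verts) : V) = v := by
    have h1 : ((q.getVert 1 : T.verts) : V) ∈ T.neighborSet s := hadj1
    rwa [hns, Set.mem_singleton_iff] at h1
  have hn2 : ¬ q.tail.Nil := by
    refine Walk.not_nil_of_ne (fun h => huv ?_)
    rw [← hx1]; exact (congrArg Subtype.val h).symm
  have hadj2 : T.coe.Adj (q.getVert 1) (q.tail.getVert 1) := q.tail.adj_snd hn2
  have hx2 : ((q.tail.getVert 1 : T.verts) : V) = s := by
    have h2 : T.Adj ((q.getVert 1 : T.verts) : V) ((q.tail.getVert 1 : T.verts) : V) := hadj2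
    rw [hx1] at h2
    have : ((q.tail.getVert 1 : T.verts) : V) ∈ T.neighborSet v := h2
    rwa [hnv, Set.mem_singleton_iff] at this
  have hnd := hq.support_nodup
  rw [← q.cons_support_tail hn1] at hnd
  have hmem : q.tail.getVert 1 ∈ q.tail.support := by
    rw [← q.tail.cons_support_tail hn2]
    exact List.mem_cons_of_mem _ (Walk.start_mem_support _)
  have heq : (⟨s, hsT⟩ : T.verts) = q.tail.getVert 1 := Subtype.ext hx2.symm
  rw [← heq] at hmem
  exact (List.nodup_cons.mp hnd).1 hmem

/-- A pendant vertex is not on a path between two other vertices. -/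
private lemma aux_not_mem_support {T : G.Subgraph} {v w : V} (hvT : v ∈ T.verts)
    (hnv : T.neighborSet v = {w}) {a b : T.verts} (p : T.coe.Walk a b) (hp : p.IsPath)
    (ha : (a : V) ≠ v) (hb : (b : V) ≠ v) : (⟨v, hvT⟩ : T.verts) ∉ p.support := by
  classical
  intro hmem
  have hane : a ≠ (⟨v, hvT⟩ : T.verts) := fun h => ha (congrArg Subtype.val h)
  have hbne : (⟨v, hvT⟩ : T.verts) ≠ b := fun h => hb (congrArg Subtype.val h).symm
  have hn1 : ¬ (p.takeUntil _ hmem).Nil := Walk.not_nil_of_ne hane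
  have hn2 : ¬ (p.dropUntil _ hmem).Nil := Walk.not_nil_of_ne hbne
  have hn1' : ¬ (p.takeUntil _ hmem).reverse.Nil := Walk.not_nil_of_ne hane.symm
  -- first edge of the second part
  have he2 : s((⟨v, hvT⟩ : T.verts), (p.dropUntil _ hmem).getVert 1) ∈
      (p.dropUntil _ hmem).edges := first_edge_mem _ hn2
  have he1 : s((⟨v, hvT⟩ : T.verts), (p.takeUntil _ hmem).reverse.getVert 1) ∈
      (p.takeUntil _ hmem).edges := by
    have := first_edge_mem _ hn1'
    rwa [Walk.edges_reverse, List.mem_reverse] at this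
  -- both second vertices are the unique neighbour w
  have hw2 : (((p.dropUntil _ hmem).getVert 1 : T.verts) : V) = w := by
    have h2 : T.Adj v (((p.dropUntil _ hmem).getVert 1 : T.verts) : V) :=
      (p.dropUntil _ hmem).adj_snd hn2
    have : (((p.dropUntil _ hmem).getVert 1 : T.verts) : V) ∈ T.neighborSet v := h2
    rwa [hnv, Set.mem_singleton_iff] at this
  have hw1 : (((p.takeUntil _ hmem).reverse.getVert 1 : T.verts) : V) = w := by
    have h1 : T.Adj v (((p.takeUntil _ hmem).reverse.getVert 1 : T.verts) : V) :=
      (p.takeUntil _ hmem).reverse.adj_snd hn1'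
    have : (((p.takeUntil _ hmem).reverse.getVert 1 : T.verts) : V) ∈ T.neighborSet v := h1
    rwa [hnv, Set.mem_singleton_iff] at this
  have heq : (p.takeUntil _ hmem).reverse.getVert 1 = (p.dropUntil _ hmem).getVert 1 :=
    Subtype.ext (by rw [hw1, hw2])
  have hnd := hp.isTrail.edges_nodup
  rw [← p.take_spec hmem, Walk.edges_append] at hnd
  have hdisj := (List.nodup_append'.mp hnd).2.2
  exact hdisj he1 (by rw [heq]; exact he2)

private lemma aux_reach (T : G.Subgraph) (v : V) {a b : T.verts} (p : T.coe.Walk a b) :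
    ∀ (ha : (a : V) ∈ (T.deleteVerts {v}).verts) (hb : (b : V) ∈ (T.deleteVerts {v}).verts),
    (∀ x ∈ p.support, (x : V) ≠ v) →
    (T.deleteVerts {v}).coe.Reachable ⟨(a : V), ha⟩ ⟨(b : V), hb⟩ := by
  induction p with
  | nil =>
    intro ha hb _
    exact Reachable.refl _
  | @cons a c b h q ih =>
    intro ha hb hs
    have hcv : (c : V) ≠ v := hs c (by simp)
    have hc : (c : V) ∈ (T.deleteVerts {v}).verts := by
      rw [Subgraph.deleteVerts_verts]
      exact ⟨c.2, by simpa using hcv⟩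
    have hadj : (T.deleteVerts {v}).coe.Adj ⟨(a : V), ha⟩ ⟨(c : V), hc⟩ := by
      show (T.deleteVerts {v}).Adj (a : V) (c : V)
      rw [Subgraph.deleteVerts_adj]
      exact ⟨a.2, by simpa using hs a (by simp), c.2, by simpa using hcv, h⟩
    exact hadj.reachable.trans (ih hc hb (fun x hx => hs x (by simp only [Walk.support_cons, List.mem_cons]; exact Or.inr hx)))

private lemma aux_connected {T : G.Subgraph} (htree : T.coe.IsTree) {v w : V}
    (hvT : v ∈ T.verts) (hnv : T.neighborSet v = {w})
    (hx : ∃ x, x ∈ (T.deleteVerts {v}).verts) :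
    (T.deleteVerts {v}).coe.Connected := by
  classical
  rw [connected_iff]
  refine ⟨?_, ⟨⟨hx.choose, hx.choose_spec⟩⟩⟩
  rintro ⟨a, haM⟩ ⟨b, hbM⟩
  have haM' := haM; have hbM' := hbM
  rw [Subgraph.deleteVerts_verts] at haM' hbM'
  obtain ⟨haT, hav⟩ := haM'
  obtain ⟨hbT, hbv⟩ := hbM'
  have hav' : a ≠ v := by simpa using hav
  have hbv' : b ≠ v := by simpa using hbv
  obtain ⟨q0⟩ := htree.isConnected.preconnected ⟨a, haT⟩ ⟨b, hbT⟩
  obtain ⟨q, hq⟩ := q0.toPath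
  have hnotin := aux_not_mem_support hvT hnv q hq hav' hbv'
  exact aux_reach T v q haM hbM
    (fun x hxs hxv => hnotin (by rwa [show (⟨v, hvT⟩ : T.verts) = x from Subtype.ext hxv.symm]))

private lemma aux_acyclic {T : G.Subgraph} (h : T.coe.IsAcyclic) (s : Set V) :
    (T.deleteVerts s).coe.IsAcyclic := by
  intro x c hc
  exact h (c.map (Subgraph.inclusion (T.deleteVerts_le)))
    (hc.map (Subgraph.inclusion.injective (T.deleteVerts_le)))

/-- Removing the extra leaf `v` from a pendant `insert v S`-Steiner tree gives a pendant
`S`-Steiner tree. -/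
private lemma aux_key {S : Set V} {v : V} (hvS : v ∉ S)
    (hS2 : ∃ s ∈ S, ∃ u ∈ S, s ≠ u)
    {T : G.Subgraph} (h : IsPendantSteinerTree G (insert v S) T) :
    IsPendantSteinerTree G S (T.deleteVerts {v}) := by
  obtain ⟨htree, hsub, hdeg⟩ := h
  obtain ⟨s, hs, u, hu, hsu⟩ := hS2
  have hvT : v ∈ T.verts := hsub (Set.mem_insert v S)
  obtain ⟨w, hw⟩ := Set.ncard_eq_one.mp (hdeg v (Set.mem_insert v S))
  have hkey : ∀ x ∈ S, ¬ T.Adj x v := by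
    intro x hxS hxv
    obtain ⟨y, hy⟩ := Set.ncard_eq_one.mp (hdeg x (Set.mem_insert_of_mem v hxS))
    have hvy : v ∈ T.neighborSet x := hxv
    rw [hy, Set.mem_singleton_iff] at hvy
    have hnx : T.neighborSet x = {v} := by rw [hy, hvy]
    have hxw : x ∈ T.neighborSet v := hxv.symm
    rw [hw, Set.mem_singleton_iff] at hxw
    have hnv' : T.neighborSet v = {x} := by rw [hw, hxw]
    have hxv' : x ≠ v := fun hh => hvS (hh ▸ hxS)
    -- pick a third vertex z in S distinct from x
    by_cases hxs : x = s
    · exact aux_no_leaf_pair htree (hsub (Set.mem_insert_of_mem v hxS)) hvT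
        (hsub (Set.mem_insert_of_mem v hu)) (fun hh => hsu ((hxs ▸ hh).symm))
        (fun hh => hvS (hh ▸ hu)) hnx hnv'
    · exact aux_no_leaf_pair htree (hsub (Set.mem_insert_of_mem v hxS)) hvT
        (hsub (Set.mem_insert_of_mem v hs)) (fun hh => hxs hh.symm)
        (fun hh => hvS (hh ▸ hs)) hnx hnv'
  have hSsub : S ⊆ (T.deleteVerts {v}).verts := by
    intro x hxS
    rw [Subgraph.deleteVerts_verts]
    exact ⟨hsub (Set.mem_insert_of_mem v hxS), by simp; exact fun hh => hvS (hh ▸ hxS)⟩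
  have hnbr : ∀ x ∈ S, (T.deleteVerts {v}).neighborSet x = T.neighborSet x := by
    intro x hxS
    ext y
    simp only [Subgraph.mem_neighborSet, Subgraph.deleteVerts_adj, Set.mem_singleton_iff]
    constructor
    · rintro ⟨-, -, -, -, hadj⟩; exact hadj
    · intro hadj
      have hyv : y ≠ v := fun hh => hkey x hxS (hh ▸ hadj)
      exact ⟨hadj.fst_mem, fun hh => hvS (hh ▸ hxS), hadj.snd_mem, hyv, hadj⟩
  refine ⟨⟨?_, aux_acyclic htree.IsAcyclic {v}⟩, hSsub, ?_⟩
  · exact aux_connected htree hvT hw ⟨s, hSsub hs⟩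
  · intro x hxS
    rw [hnbr x hxS]
    exact hdeg x (Set.mem_insert_of_mem v hxS)

private lemma aux_bdd [Fintype V] (G : SimpleGraph V) (k : ℕ) (hk : 1 ≤ k)
    (hcard : k ≤ Fintype.card V) :
    BddAbove {ℓ | ∀ S : Finset V, S.card = k → HasPendantTrees G (↑S) ℓ} := by
  classical
  obtain ⟨S0, -, hS0⟩ := Finset.exists_subset_card_eq
    (s := (Finset.univ : Finset V)) (n := k) (by simpa using hcard)
  obtain ⟨s, hs⟩ := Finset.card_pos.mp (by omega : 0 < S0.card)
  refine ⟨Nat.card (Sym2 V), ?_⟩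
  intro ℓ hℓ
  obtain ⟨T, hT, hdisj⟩ := hℓ S0 hS0
  have hedge : ∀ i, ∃ e, e ∈ (T i).edgeSet := by
    intro i
    obtain ⟨-, -, hdeg⟩ := hT i
    obtain ⟨y, hy⟩ := Set.ncard_eq_one.mp (hdeg s (Finset.mem_coe.mpr hs))
    have : y ∈ (T i).neighborSet s := by rw [hy]; exact Set.mem_singleton y
    exact ⟨s(s, y), Subgraph.mem_edgeSet.mpr this⟩
  choose f hf using hedge
  have hinj : Function.Injective f := by
    intro i j hij
    by_contra hne
    have hmem : f i ∈ (T i).edgeSet ∩ (T j).edgeSet := ⟨hf i, hij ▸ hf j⟩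
    rw [(hdisj i j hne).1] at hmem
    exact hmem
  calc ℓ = Nat.card (Fin ℓ) := by simp
    _ ≤ Nat.card (Sym2 V) := Nat.card_le_card_of_injective f hinj

end Aux

theorem stmt3 {V : Type*} [Fintype V] (G : SimpleGraph V) (k : ℕ) (hk : 2 ≤ k) :
    pendantConn G (k + 1) ≤ pendantConn G k := by
  classical
  by_cases hV : k < Fintype.card V
  · have hbdd := aux_bdd G k (by omega) (by omega)
    have hne : {ℓ | ∀ S : Finset V, S.card = k + 1 → HasPendantTrees G (↑S) ℓ}.Nonempty :=
      ⟨0, fun S _ => ⟨fun i => i.elim0, fun i => i.elim0, fun i => i.elim0⟩⟩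
    refine csSup_le_csSup hbdd hne ?_
    intro ℓ hℓ S hS
    obtain ⟨v, hvS⟩ : ∃ v, v ∉ S := by
      by_contra hc
      push_neg at hc
      have : S = Finset.univ := Finset.eq_univ_iff_forall.mpr hc
      rw [this, Finset.card_univ] at hS
      omega
    have hcard : (insert v S).card = k + 1 := by
      rw [Finset.card_insert_of_notMem hvS, hS]
    obtain ⟨T, hT, hdisj⟩ := hℓ (insert v S) hcard
    have hvS' : v ∉ (↑S : Set V) := by simpa using hvS
    refine ⟨fun i => (T i).deleteVerts {v}, ?_, ?_⟩
    · intro i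
      refine aux_key hvS' ?_ ?_
      · obtain ⟨a, ha, b, hb, hab⟩ := Finset.one_lt_card.mp (by omega : 1 < S.card)
        exact ⟨a, by simpa using ha, b, by simpa using hb, hab⟩
      · have := hT i
        rwa [Finset.coe_insert] at this
    · intro i j hij
      obtain ⟨he, hv'⟩ := hdisj i j hij
      constructor
      · apply Set.eq_empty_of_subset_empty
        intro e hee
        rw [← he]
        exact ⟨Subgraph.edgeSet_mono (Subgraph.deleteVerts_le) hee.1,
          Subgraph.edgeSet_mono (Subgraph.deleteVerts_le) hee.2⟩
      · rw [Subgraph.deleteVerts_verts, Subgraph.deleteVerts_verts]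
        have : ((T i).verts \ {v}) ∩ ((T j).verts \ {v}) =
            ((T i).verts ∩ (T j).verts) \ {v} := by
          ext x; simp only [Set.mem_inter_iff, Set.mem_diff]; tauto
        rw [this, hv', Finset.coe_insert, Set.insert_diff_self_of_notMem hvS']
  · have hset : {ℓ | ∀ S : Finset V, S.card = k + 1 → HasPendantTrees G (↑S) ℓ} =
        Set.univ := by
      ext ℓ
      simp only [Set.mem_setOf_eq, Set.mem_univ, iff_true]
      intro S hS
      exfalso
      have := Finset.card_le_univ S
      omega
    rw [pendantConn, hset, csSup_of_not_bddAbove (by simpa using not_bddAbove_univ (α := ℕ)),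
      csSup_empty]
    exact Nat.zero_le _
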